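/- Let μ be a (C,α)-Ahlfors regular measure on ℝ, R ≥ 2 an integer with R^α ≥ 21C², and J ⊂ ℝ a closed interval with μ(J) ≥ (3C)⁻¹|J|^α, short enough for the Ahlfors regularity bounds to apply (3|J| ≤ ρ₀). Partition J into R closed subintervals of equal length |J|/R. Then at least (4C)⁻²R^α of these subintervals I satisfy μ(I) ≥ (3C)⁻¹|I|^α. -/

import Mathlib

open MeasureTheory Metric

/-- The (topological) support of a measure. -/
def msupp {X : Type*} [MetricSpace X] [MeasurableSpace X] (μ : Measure X) : Set X :=
  {x | ∀ r : ℝ, 0 < r → 0 < μ (ball x r)}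

lemma stmt17_arith (C x s t : ℝ) (hC : 1 < C) (h1 : x ≤ 3 * C ^ 2 * t)
    (h2 : t ≤ 3 * s + 2) (h3 : 21 * C ^ 2 ≤ x) (hs : 0 ≤ s) :
    ((4 * C) ^ 2)⁻¹ * x ≤ s := by
  have hC2 : (0:ℝ) < C ^ 2 := by positivity
  rw [inv_mul_le_iff₀ (by positivity)]
  nlinarith [mul_le_mul_of_nonneg_left h2 (by positivity : (0:ℝ) ≤ 3 * C ^ 2),
    mul_nonneg hC2.le hs]

/-- Let μ be (C,α)-Ahlfors regular on ℝ with radius ρ₀, R ≥ 2 with R^α ≥ 21C², and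
J = [a,b] with μ(J) ≥ (3C)⁻¹|J|^α and 3|J| ≤ ρ₀. Partitioning J into R equal closed
subintervals, at least (4C)⁻²R^α of them I satisfy μ(I) ≥ (3C)⁻¹|I|^α. -/
theorem stmt17 (μ : Measure ℝ) (C α ρ₀ : ℝ) (hC : 1 < C) (hα : 0 < α) (hρ₀ : 0 < ρ₀)
    (hAhl : ∀ x ∈ msupp μ, ∀ ρ : ℝ, 0 < ρ → ρ ≤ ρ₀ →
      ENNReal.ofReal (C⁻¹ * ρ ^ α) ≤ μ (closedBall x ρ) ∧
      μ (closedBall x ρ) ≤ ENNReal.ofReal (C * ρ ^ α))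
    (R : ℕ) (hR : 2 ≤ R) (hRα : 21 * C ^ 2 ≤ (R : ℝ) ^ α)
    (a b : ℝ) (hab : a < b) (hbρ : 3 * (b - a) ≤ ρ₀)
    (hJ : ENNReal.ofReal ((3 * C)⁻¹ * (b - a) ^ α) ≤ μ (Set.Icc a b)) :
    ∃ S : Finset ℕ, S ⊆ Finset.range R ∧
      (∀ m ∈ S,
        ENNReal.ofReal ((3 * C)⁻¹ * ((b - a) / (R : ℝ)) ^ α) ≤
          μ (Set.Icc (a + (m : ℝ) * ((b - a) / (R : ℝ)))
              (a + ((m : ℝ) + 1) * ((b - a) / (R : ℝ))))) ∧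
      ((4 * C) ^ 2)⁻¹ * (R : ℝ) ^ α ≤ (S.card : ℝ) := by
  classical
  have hb : 0 < b - a := sub_pos.mpr hab
  have hR1 : (1:ℝ) ≤ (R:ℝ) := by exact_mod_cast Nat.one_le_of_lt hR
  have hRpos : (0:ℝ) < (R:ℝ) := by linarith
  set δ := (b - a) / (R:ℝ) with hδdef
  have hδ : 0 < δ := div_pos hb hRpos
  have hδρ : δ ≤ ρ₀ := by
    have h1 : δ ≤ b - a := by rw [hδdef]; exact div_le_self hb.le hR1
    linarith
  have hRδ : (R:ℝ) * δ = b - a := by rw [hδdef]; field_simp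
  have hδα : (0:ℝ) < δ ^ α := Real.rpow_pos_of_pos hδ α
  have hCpos : (0:ℝ) < C := by linarith
  set I : ℕ → Set ℝ := fun m => Set.Icc (a + (m:ℝ) * δ) (a + ((m:ℝ) + 1) * δ) with hIdef
  set P : ℕ → Prop := fun m => ENNReal.ofReal ((3 * C)⁻¹ * δ ^ α) ≤ μ (I m) with hPdef
  set S : Finset ℕ := (Finset.range R).filter P with hSdef
  set T : Finset ℕ := (Finset.range R).filter (fun m => (I m ∩ msupp μ).Nonempty) with hTdef
  set T' : Finset ℕ := T.filter (fun m => 1 ≤ m ∧ m + 2 ≤ R) with hT'def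
  -- intervals disjoint from the support are null
  have hnull : ∀ m, ¬ (I m ∩ msupp μ).Nonempty → μ (I m) = 0 := by
    intro m hm
    have hemp : I m ∩ msupp μ = ∅ := Set.not_nonempty_iff_eq_empty.mp hm
    have hsub : I m ⊆ (msupp μ)ᶜ := by
      intro x hx hxs
      exact absurd (Set.mem_inter hx hxs) (by simp [hemp])
    refine measure_mono_null hsub ?_
    refine measure_null_of_locally_null _ (fun x hx => ?_)
    have : ¬ ∀ r : ℝ, 0 < r → 0 < μ (ball x r) := hx
    push_neg at this
    obtain ⟨r, hr, hμr⟩ := this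
    exact ⟨ball x r, mem_nhdsWithin_of_mem_nhds (ball_mem_nhds x hr),
      le_antisymm hμr zero_le⟩
  -- the intervals cover J
  have hcover : Set.Icc a b ⊆ ⋃ m ∈ Finset.range R, I m := by
    intro x hx
    set t := (x - a) / δ with ht
    have ht0 : 0 ≤ t := div_nonneg (by linarith [hx.1]) hδ.le
    have htR : t ≤ (R:ℝ) := by
      rw [ht, div_le_iff₀ hδ]
      linarith [hx.2, hRδ]
    have hxt : x = a + t * δ := by
      rw [ht]; field_simp; ring
    set m := min (Nat.floor t) (R - 1) with hm
    have hmR : m < R := by omega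
    have hml : (m:ℝ) ≤ t := by
      rcases le_or_gt (Nat.floor t) (R - 1) with hc | hc
      · have : m = Nat.floor t := by omega
        rw [this]; exact Nat.floor_le ht0
      · have hmeq : m = R - 1 := by omega
        have h1 : ((R:ℕ):ℝ) ≤ Nat.floor t := by exact_mod_cast Nat.le_of_lt_succ (by omega)
        have h2 : (Nat.floor t : ℝ) ≤ t := Nat.floor_le ht0
        have h3 : ((m:ℕ):ℝ) = (R:ℝ) - 1 := by
          rw [hmeq]; push_cast [Nat.cast_sub (by omega : 1 ≤ R)]; ring
        linarith
    have hmu : t ≤ (m:ℝ) + 1 := by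
      rcases le_or_gt (Nat.floor t) (R - 1) with hc | hc
      · have heq : m = Nat.floor t := by omega
        have := Nat.lt_floor_add_one t
        rw [heq]; linarith
      · have hmeq : m = R - 1 := by omega
        have h3 : ((m:ℕ):ℝ) = (R:ℝ) - 1 := by
          rw [hmeq]; push_cast [Nat.cast_sub (by omega : 1 ≤ R)]; ring
        linarith
    refine Set.mem_biUnion (Finset.mem_range.mpr hmR) ?_
    constructor
    · rw [hxt]; nlinarith
    · rw [hxt]; nlinarith
  -- each interval meeting the support has small measure
  have hupper : ∀ m ∈ T, μ (I m) ≤ ENNReal.ofReal (C * δ ^ α) := by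
    intro m hm
    obtain ⟨x, hxI, hxs⟩ := (Finset.mem_filter.mp hm).2
    have hsub : I m ⊆ closedBall x δ := by
      intro y hy
      rw [Real.closedBall_eq_Icc]
      dsimp only [I] at hy
      have h1 := hxI.1; have h2 := hxI.2
      have h3 := hy.1; have h4 := hy.2
      exact ⟨by linarith, by linarith⟩
    have h2 := (hAhl x hxs δ hδ hδρ).2
    exact (measure_mono hsub).trans h2
  -- lower bound on the number of intervals meeting the support
  have hTcard : (R:ℝ) ^ α ≤ 3 * C ^ 2 * T.card := by
    have hsum : μ (Set.Icc a b) ≤ ∑ m ∈ Finset.range R, μ (I m) :=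
      (measure_mono hcover).trans (measure_biUnion_finset_le _ _)
    have hzero : ∑ m ∈ Finset.range R, μ (I m) = ∑ m ∈ T, μ (I m) := by
      refine (Finset.sum_subset (Finset.filter_subset _ _) (fun m hm hmn => ?_)).symm
      exact hnull m (fun hne => hmn (Finset.mem_filter.mpr ⟨hm, hne⟩))
    have hsum2 : ∑ m ∈ T, μ (I m) ≤ T.card • ENNReal.ofReal (C * δ ^ α) :=
      Finset.sum_le_card_nsmul _ _ _ hupper
    have hsum3 : T.card • ENNReal.ofReal (C * δ ^ α)
        = ENNReal.ofReal (T.card * (C * δ ^ α)) := by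
      rw [nsmul_eq_mul, ← ENNReal.ofReal_natCast, ← ENNReal.ofReal_mul (by positivity)]
    have hall : ENNReal.ofReal ((3 * C)⁻¹ * (b - a) ^ α)
        ≤ ENNReal.ofReal (T.card * (C * δ ^ α)) := by
      calc ENNReal.ofReal ((3 * C)⁻¹ * (b - a) ^ α) ≤ μ (Set.Icc a b) := hJ
        _ ≤ ∑ m ∈ Finset.range R, μ (I m) := hsum
        _ = ∑ m ∈ T, μ (I m) := hzero
        _ ≤ T.card • ENNReal.ofReal (C * δ ^ α) := hsum2
        _ = ENNReal.ofReal (T.card * (C * δ ^ α)) := hsum3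
    have hreal : (3 * C)⁻¹ * (b - a) ^ α ≤ T.card * (C * δ ^ α) :=
      (ENNReal.ofReal_le_ofReal_iff (by positivity)).mp hall
    have hba : (b - a) ^ α = (R:ℝ) ^ α * δ ^ α := by
      rw [← hRδ, Real.mul_rpow hRpos.le hδ.le]
    rw [hba] at hreal
    have h1 : (3 * C)⁻¹ * (R:ℝ) ^ α ≤ (T.card : ℝ) * C := by
      have := hreal
      rw [mul_comm ((R:ℝ)^α) (δ^α), ← mul_assoc] at this
      have h2 : (3*C)⁻¹ * δ^α * (R:ℝ)^α = ((3*C)⁻¹ * (R:ℝ)^α) * δ^α := by ring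
      have h3 : (T.card : ℝ) * (C * δ^α) = ((T.card : ℝ) * C) * δ^α := by ring
      rw [h2, h3] at this
      exact le_of_mul_le_mul_right this hδα
    have h4 : (3*C) * ((3 * C)⁻¹ * (R:ℝ) ^ α) ≤ (3*C) * ((T.card : ℝ) * C) :=
      mul_le_mul_of_nonneg_left h1 (by positivity)
    rw [← mul_assoc, mul_inv_cancel₀ (by positivity : (3:ℝ)*C ≠ 0), one_mul] at h4
    nlinarith
  -- for every non-extreme interval meeting the support, a nearby interval is in S
  have hkey : ∀ m ∈ T', ∃ s ∈ S, m ∈ ({s - 1, s, s + 1} : Finset ℕ) := by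
    intro m hm
    obtain ⟨hmT, hm1, hm2⟩ := Finset.mem_filter.mp hm
    obtain ⟨x, hxI, hxs⟩ := (Finset.mem_filter.mp hmT).2
    have hm1' : (1:ℝ) ≤ (m:ℝ) := by exact_mod_cast hm1
    have hm2' : (m:ℝ) + 2 ≤ (R:ℝ) := by exact_mod_cast hm2
    have hcastm : ((m - 1 : ℕ) : ℝ) = (m:ℝ) - 1 := by
      rw [Nat.cast_sub hm1]; norm_num
    -- the ball around x is contained in the three intervals
    have hball : closedBall x δ ⊆ I (m - 1) ∪ I m ∪ I (m + 1) := by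
      intro y hy
      rw [Real.closedBall_eq_Icc] at hy
      have hxl := hxI.1; have hxu := hxI.2
      have hy1 := hy.1; have hy2 := hy.2
      dsimp only [I] at hxl hxu ⊢
      rcases le_or_gt y (a + (m:ℝ) * δ) with hc | hc
      · left; left
        rw [hcastm, Set.mem_Icc]
        exact ⟨by linarith, by linarith⟩
      · rcases le_or_gt y (a + ((m:ℝ) + 1) * δ) with hc2 | hc2
        · left; right; exact Set.mem_Icc.mpr ⟨hc.le, hc2⟩
        · right
          rw [Set.mem_Icc]
          push_cast
          exact ⟨by linarith, by linarith⟩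
    have hlow := (hAhl x hxs δ hδ hδρ).1
    have hsum : μ (closedBall x δ) ≤ μ (I (m-1)) + μ (I m) + μ (I (m+1)) := by
      calc μ (closedBall x δ) ≤ μ (I (m-1) ∪ I m ∪ I (m+1)) := measure_mono hball
        _ ≤ μ (I (m-1) ∪ I m) + μ (I (m+1)) := measure_union_le _ _
        _ ≤ μ (I (m-1)) + μ (I m) + μ (I (m+1)) :=
            add_le_add_left (measure_union_le _ _) _
    have hex : ∃ k ∈ ({m - 1, m, m + 1} : Finset ℕ), P k := by
      by_contra hno
      push_neg at hno
      have h1 : μ (I (m-1)) < ENNReal.ofReal ((3 * C)⁻¹ * δ ^ α) :=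
        lt_of_not_ge (hno (m-1) (by simp))
      have h2 : μ (I m) < ENNReal.ofReal ((3 * C)⁻¹ * δ ^ α) :=
        lt_of_not_ge (hno m (by simp))
      have h3 : μ (I (m+1)) < ENNReal.ofReal ((3 * C)⁻¹ * δ ^ α) :=
        lt_of_not_ge (hno (m+1) (by simp))
      have hadd := ENNReal.add_lt_add (ENNReal.add_lt_add h1 h2) h3
      have heq : ENNReal.ofReal ((3 * C)⁻¹ * δ ^ α) + ENNReal.ofReal ((3 * C)⁻¹ * δ ^ α)
          + ENNReal.ofReal ((3 * C)⁻¹ * δ ^ α) = ENNReal.ofReal (C⁻¹ * δ ^ α) := by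
        rw [← ENNReal.ofReal_add (by positivity) (by positivity),
          ← ENNReal.ofReal_add (by positivity) (by positivity)]
        congr 1
        field_simp
        ring
      rw [heq] at hadd
      exact absurd (hlow.trans hsum) (not_le.mpr hadd)
    obtain ⟨k, hkmem, hkP⟩ := hex
    have hkR : k < R := by
      simp only [Finset.mem_insert, Finset.mem_singleton] at hkmem
      omega
    refine ⟨k, Finset.mem_filter.mpr ⟨Finset.mem_range.mpr hkR, hkP⟩, ?_⟩
    simp only [Finset.mem_insert, Finset.mem_singleton] at hkmem ⊢
    omega
  -- counting
  have hT'sub : T' ⊆ S.biUnion (fun s => {s - 1, s, s + 1}) := by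
    intro m hm
    obtain ⟨s, hs, hms⟩ := hkey m hm
    exact Finset.mem_biUnion.mpr ⟨s, hs, hms⟩
  have hT'card : T'.card ≤ 3 * S.card := by
    calc T'.card ≤ (S.biUnion (fun s => {s - 1, s, s + 1})).card :=
          Finset.card_le_card hT'sub
      _ ≤ ∑ s ∈ S, ({s - 1, s, s + 1} : Finset ℕ).card := Finset.card_biUnion_le
      _ ≤ ∑ s ∈ S, 3 := Finset.sum_le_sum (fun s _ => by
          calc ({s - 1, s, s + 1} : Finset ℕ).card
              ≤ ({s, s + 1} : Finset ℕ).card + 1 := Finset.card_insert_le _ _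
            _ ≤ (({s + 1} : Finset ℕ).card + 1) + 1 :=
                add_le_add_left (Finset.card_insert_le _ _) _
            _ = 3 := by simp)
      _ = 3 * S.card := by rw [Finset.sum_const, smul_eq_mul, mul_comm]
  have hTT' : T.card ≤ T'.card + 2 := by
    have hsub2 : T ⊆ T' ∪ {0, R - 1} := by
      intro m hm
      rcases Finset.mem_filter.mp hm with ⟨hmr, _⟩
      have hmR : m < R := Finset.mem_range.mp hmr
      by_cases hc : 1 ≤ m ∧ m + 2 ≤ R
      · exact Finset.mem_union_left _ (Finset.mem_filter.mpr ⟨hm, hc⟩)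
      · refine Finset.mem_union_right _ ?_
        simp only [Finset.mem_insert, Finset.mem_singleton]
        omega
    calc T.card ≤ (T' ∪ {0, R - 1}).card := Finset.card_le_card hsub2
      _ ≤ T'.card + ({0, R - 1} : Finset ℕ).card := Finset.card_union_le _ _
      _ ≤ T'.card + 2 := add_le_add_right (Finset.card_insert_le _ _ |>.trans (by simp)) _
  -- conclude
  refine ⟨S, Finset.filter_subset _ _, fun m hm => (Finset.mem_filter.mp hm).2, ?_⟩
  have hcards : (T.card : ℝ) ≤ 3 * S.card + 2 := by
    have : (T.card : ℝ) ≤ (T'.card : ℝ) + 2 := by exact_mod_cast hTT'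
    have h2 : (T'.card : ℝ) ≤ 3 * S.card := by exact_mod_cast hT'card
    linarith
  exact stmt17_arith C ((R:ℝ) ^ α) (S.card : ℝ) (T.card : ℝ) hC hTcard hcards hRα
    (Nat.cast_nonneg _)
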